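/- Let x : Fin N → ℝ and let σ be a permutation sorting x nondecreasingly. For 2 ≤ n ≤ N, x(σ(n)) = max over j ∈ {1,…,N} of (the (n−1)-th smallest term of x^{(j)}), where the maximum over all j (not just j ≤ N−n+2) still yields the n-th smallest term. -/

import Mathlib

/-- Counting characterization of the `k`-th order statistic. -/
lemma sorted_le_iff_card {M : ℕ} (y : Fin M → ℝ) (π : Equiv.Perm (Fin M))
    (h : Monotone (y ∘ π)) (k : Fin M) (v : ℝ) :
    y (π k) ≤ v ↔ (k : ℕ) + 1 ≤ (Finset.univ.filter (fun i => y i ≤ v)).card := by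
  constructor
  · intro hv
    have hsub : (Finset.Iic k).image π ⊆ Finset.univ.filter (fun i => y i ≤ v) := by
      intro i hi
      simp only [Finset.mem_image, Finset.mem_Iic] at hi
      obtain ⟨m, hm, rfl⟩ := hi
      simp only [Finset.mem_filter, Finset.mem_univ, true_and]
      exact le_trans (h hm) hv
    calc (k : ℕ) + 1 = (Finset.Iic k).card := (Fin.card_Iic k).symm
      _ = ((Finset.Iic k).image π).card :=
          (Finset.card_image_of_injective _ π.injective).symm
      _ ≤ _ := Finset.card_le_card hsub
  · intro hc
    by_contra hv
    push_neg at hv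
    have hsub : Finset.univ.filter (fun i => y i ≤ v) ⊆ (Finset.Iio k).image π := by
      intro i hi
      simp only [Finset.mem_filter, Finset.mem_univ, true_and] at hi
      simp only [Finset.mem_image, Finset.mem_Iio]
      refine ⟨π.symm i, ?_, π.apply_symm_apply i⟩
      by_contra hk
      push_neg at hk
      have h1 : y (π k) ≤ y (π (π.symm i)) := h hk
      rw [π.apply_symm_apply] at h1
      exact absurd (h1.trans hi) (not_le.mpr hv)
    have := (Finset.card_le_card hsub).trans
      ((Finset.card_image_le).trans (le_of_eq (Fin.card_Iio k)))
    omega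

/-- Counting in a deleted sequence equals counting away from the deleted index. -/
lemma card_filter_succAbove (N : ℕ) (j : Fin (N + 1)) (p : Fin (N + 1) → Prop)
    [DecidablePred p] :
    (Finset.univ.filter (fun i : Fin N => p (j.succAbove i))).card =
      ((Finset.univ.filter (fun i : Fin (N + 1) => p i)).erase j).card := by
  apply Finset.card_bij (fun i _ => j.succAbove i)
  · intro i hi
    simp only [Finset.mem_filter, Finset.mem_univ, true_and] at hi
    simp only [Finset.mem_erase, Finset.mem_filter, Finset.mem_univ, true_and]
    exact ⟨Fin.succAbove_ne j i, hi⟩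
  · intro a _ b _ hab
    exact Fin.succAbove_right_injective hab
  · intro i hi
    simp only [Finset.mem_erase, Finset.mem_filter, Finset.mem_univ, true_and] at hi
    obtain ⟨z, hz⟩ := Fin.exists_succAbove_eq hi.1
    refine ⟨z, ?_, hz⟩
    simp only [Finset.mem_filter, Finset.mem_univ, true_and, hz]
    exact hi.2

/-- The sequence `x` has `N + 1` terms; `σ` sorts `x`, and for each index `j`,
`τ j` sorts the sequence obtained from `x` by deleting the `j`-th term. The
`n`-th smallest term of `x` is the maximum over all `j` (not just
`j ≤ N - n + 2`) of the `(n-1)`-th smallest term of the deleted sequence. -/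
theorem nth_smallest_eq_sup_deleted (N : ℕ) (x : Fin (N + 1) → ℝ)
    (σ : Equiv.Perm (Fin (N + 1))) (hσ : Monotone (x ∘ σ))
    (n : ℕ) (hn2 : 2 ≤ n) (hnN : n ≤ N + 1)
    (τ : Fin (N + 1) → Equiv.Perm (Fin N))
    (hτ : ∀ j, Monotone ((x ∘ j.succAbove) ∘ τ j)) :
    x (σ ⟨n - 1, by omega⟩) =
      Finset.univ.sup' Finset.univ_nonempty
        (fun j : Fin (N + 1) => (x ∘ j.succAbove) (τ j ⟨n - 2, by omega⟩)) := by
  have hN : 1 ≤ N := by omega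
  set a : ℝ := x (σ ⟨n - 1, by omega⟩) with ha
  -- the minimum property of x (σ 0)
  have hmin : ∀ i, x (σ 0) ≤ x i := by
    intro i
    have := hσ (Fin.zero_le (σ.symm i))
    simpa using this
  apply le_antisymm
  · -- a ≤ sup', witnessed by j = σ 0
    set j : Fin (N + 1) := σ 0 with hj
    set b : ℝ := (x ∘ j.succAbove) (τ j ⟨n - 2, by omega⟩) with hb
    have hab : a ≤ b := by
      rw [ha]
      rw [sorted_le_iff_card x σ hσ ⟨n - 1, by omega⟩ b]
      -- count indices i with x i ≤ b : at least n of them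
      have h1 : (n - 2 : ℕ) + 1 ≤
          (Finset.univ.filter (fun i : Fin N => x (j.succAbove i) ≤ b)).card := by
        have := (sorted_le_iff_card (x ∘ j.succAbove) (τ j) (hτ j) ⟨n - 2, by omega⟩ b).mp
          le_rfl
        simpa using this
      have h2 := card_filter_succAbove N j (fun i => x i ≤ b)
      have hjmem : j ∈ Finset.univ.filter (fun i : Fin (N + 1) => x i ≤ b) := by
        simp only [Finset.mem_filter, Finset.mem_univ, true_and]
        exact hmin _
      have h3 := Finset.card_erase_add_one hjmem
      simp only [Fin.val_mk] at *
      omega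
    exact hab.trans (Finset.le_sup'
      (fun j : Fin (N + 1) => (x ∘ j.succAbove) (τ j ⟨n - 2, by omega⟩))
      (Finset.mem_univ j))
  · -- sup' ≤ a
    apply Finset.sup'_le
    intro j _
    rw [sorted_le_iff_card (x ∘ j.succAbove) (τ j) (hτ j) ⟨n - 2, by omega⟩ a]
    simp only [Function.comp_apply, Fin.val_mk]
    have h1 : (n - 1 : ℕ) + 1 ≤
        (Finset.univ.filter (fun i : Fin (N + 1) => x i ≤ a)).card := by
      have := (sorted_le_iff_card x σ hσ ⟨n - 1, by omega⟩ a).mp le_rfl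
      simpa using this
    have h2 := card_filter_succAbove N j (fun i => x i ≤ a)
    have h3 : (Finset.univ.filter (fun i : Fin (N + 1) => x i ≤ a)).card - 1 ≤
        ((Finset.univ.filter (fun i : Fin (N + 1) => x i ≤ a)).erase j).card :=
      Finset.pred_card_le_card_erase
    omega
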